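/- Let g be a complex Lie algebra with anti-linear involution σ and q a complex Lie subalgebra with σ-extension q' (the largest complex Lie subalgebra with q ⊆ q' ⊆ q + σ(q)). If Z ∈ σ(q) \ q has finite Levi-order k ≥ 1 and (Z₁,…,Z_k) is a minimal-length Levi-sequence for Z, then each Z_i lies in q \ σ(q). -/

import Mathlib

variable {L : Type*} [LieRing L] [LieAlgebra ℂ L]

/-- Membership in `q + σ(q)`. -/
def memSumConj (σ : L → L) (q : LieSubalgebra ℂ L) (y : L) : Prop :=
  ∃ a ∈ q, ∃ b ∈ q, y = a + σ b

/-- `(Z₁,…,Z_k)` is a Levi-sequence for `Z`: all `Z_i ∈ q` and the left-normed iterated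
bracket `[Z, Z₁, …, Z_k]` does not lie in `q + σ(q)`. -/
def IsLeviSeq (σ : L → L) (q : LieSubalgebra ℂ L) (Z : L) {k : ℕ} (W : Fin k → L) : Prop :=
  (∀ i, W i ∈ q) ∧ ¬ memSumConj σ q ((List.ofFn W).foldl (fun a b => ⁅a, b⁆) Z)

set_option linter.unusedSectionVars false

section aux
variable (σ : L → L) (q : LieSubalgebra ℂ L)

lemma msc_add (hadd : ∀ x y : L, σ (x + y) = σ x + σ y) {x y : L}
    (hx : memSumConj σ q x) (hy : memSumConj σ q y) : memSumConj σ q (x + y) := by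
  obtain ⟨a, ha, b, hb, rfl⟩ := hx
  obtain ⟨a', ha', b', hb', rfl⟩ := hy
  exact ⟨a + a', q.add_mem ha ha', b + b', q.add_mem hb hb', by rw [hadd]; abel⟩

lemma msc_neg (hsmul : ∀ (c : ℂ) (x : L), σ (c • x) = (starRingEnd ℂ) c • σ x) {x : L}
    (hx : memSumConj σ q x) : memSumConj σ q (-x) := by
  obtain ⟨a, ha, b, hb, rfl⟩ := hx
  refine ⟨-a, q.neg_mem ha, -b, q.neg_mem hb, ?_⟩
  have : σ (-b) = -σ b := by
    have := hsmul (-1) b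
    simpa using this
  rw [this]; abel

lemma foldl_br_add (x y : L) (l : List L) :
    l.foldl (fun a b => ⁅a, b⁆) (x + y)
      = l.foldl (fun a b => ⁅a, b⁆) x + l.foldl (fun a b => ⁅a, b⁆) y := by
  induction l generalizing x y with
  | nil => rfl
  | cons u t ih => simp [List.foldl_cons, add_lie, ih]

lemma foldl_br_swap (y u v : L) (m : List L) :
    (u :: v :: m).foldl (fun a b => ⁅a, b⁆) y
      = (v :: u :: m).foldl (fun a b => ⁅a, b⁆) y
        + (⁅u, v⁆ :: m).foldl (fun a b => ⁅a, b⁆) y := by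
  simp only [List.foldl_cons]
  rw [← foldl_br_add]
  congr 1
  rw [lie_lie, ← lie_skew u ⁅y, v⁆]
  abel

end aux

section main
variable (σ : L → L) (q : LieSubalgebra ℂ L)

/-- Moving an entry to the end of the bracket changes it by shorter brackets. -/
lemma msc_move (hadd : ∀ x y : L, σ (x + y) = σ x + σ y)
    (hsmul : ∀ (c : ℂ) (x : L), σ (c • x) = (starRingEnd ℂ) c • σ x)
    (Z : L) (k : ℕ)
    (Hmin : ∀ l : List L, (∀ x ∈ l, x ∈ q) → l.length < k →
      memSumConj σ q (l.foldl (fun a b => ⁅a, b⁆) Z)) :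
    ∀ (m l : List L) (w : L), (∀ x ∈ l, x ∈ q) → (∀ x ∈ m, x ∈ q) → w ∈ q →
      l.length + 1 + m.length = k →
      memSumConj σ q ((l ++ w :: m).foldl (fun a b => ⁅a, b⁆) Z
        - ((l ++ m) ++ [w]).foldl (fun a b => ⁅a, b⁆) Z) := by
  intro m
  induction m with
  | nil =>
    intro l w hl hm hw hlen
    have hz : σ (0 : L) = 0 := by
      have := hsmul 0 0; simpa using this
    simp only [List.append_nil]
    refine ⟨0, q.zero_mem, 0, q.zero_mem, ?_⟩
    rw [hz, sub_self, add_zero]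
  | cons v m ih =>
    intro l w hl hm hw hlen
    have hswap := foldl_br_swap (l.foldl (fun a b => ⁅a, b⁆) Z) w v m
    have key : (l ++ w :: v :: m).foldl (fun a b => ⁅a, b⁆) Z
        = (l ++ v :: w :: m).foldl (fun a b => ⁅a, b⁆) Z
          + (l ++ ⁅w, v⁆ :: m).foldl (fun a b => ⁅a, b⁆) Z := by
      simp only [List.foldl_append]
      exact hswap
    have hshort : memSumConj σ q ((l ++ ⁅w, v⁆ :: m).foldl (fun a b => ⁅a, b⁆) Z) := by
      refine Hmin _ ?_ ?_
      · intro x hx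
        simp only [List.mem_append, List.mem_cons] at hx
        rcases hx with h | h | h
        · exact hl x h
        · exact h ▸ q.lie_mem hw (hm v (by simp))
        · exact hm x (by simp [h])
      · simp at hlen ⊢; omega
    have hlv : ∀ x ∈ l ++ [v], x ∈ q := by
      intro x hx
      rcases List.mem_append.1 hx with h | h
      · exact hl x h
      · exact (List.mem_singleton.1 h) ▸ hm v (by simp)
    have hih := ih (l ++ [v]) w hlv (fun x hx => hm x (by simp [hx])) hw
      (by simp at hlen ⊢; omega)
    have e1 : l ++ [v] ++ w :: m = l ++ v :: w :: m := by simp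
    have e2 : (l ++ [v] ++ m) ++ [w] = (l ++ v :: m) ++ [w] := by simp
    rw [e1, e2] at hih
    have := msc_add σ q hadd hih hshort
    have eq3 : (l ++ v :: w :: m).foldl (fun a b => ⁅a, b⁆) Z
          - ((l ++ v :: m) ++ [w]).foldl (fun a b => ⁅a, b⁆) Z
        + (l ++ ⁅w, v⁆ :: m).foldl (fun a b => ⁅a, b⁆) Z
      = (l ++ w :: v :: m).foldl (fun a b => ⁅a, b⁆) Z
          - ((l ++ v :: m) ++ [w]).foldl (fun a b => ⁅a, b⁆) Z := by
      rw [key]; abel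
    rw [eq3] at this
    exact this

end main

/-- if `Z ∈ σ(q) \ q` has finite Levi-order `k ≥ 1` and `(Z₁,…,Z_k)` is a
minimal-length Levi-sequence for `Z`, then each `Z_i` lies in `q \ σ(q)`. -/
theorem leviSeq_entries_not_in_conj
    (σ : L → L)
    (hadd : ∀ x y : L, σ (x + y) = σ x + σ y)
    (hsmul : ∀ (c : ℂ) (x : L), σ (c • x) = (starRingEnd ℂ) c • σ x)
    (hbr : ∀ x y : L, σ ⁅x, y⁆ = ⁅σ x, σ y⁆)
    (hinv : ∀ x : L, σ (σ x) = x)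
    (q : LieSubalgebra ℂ L)
    (Z : L) (hZmem : σ Z ∈ q) (hZnot : Z ∉ q)
    (k : ℕ) (hk : 1 ≤ k) (W : Fin k → L)
    (hW : IsLeviSeq σ q Z W)
    (hmin : ∀ j : ℕ, j < k → ∀ W' : Fin j → L, ¬ IsLeviSeq σ q Z W') :
    ∀ i : Fin k, W i ∈ q ∧ σ (W i) ∉ q := by
  have Hmin : ∀ l : List L, (∀ x ∈ l, x ∈ q) → l.length < k →
      memSumConj σ q (l.foldl (fun a b => ⁅a, b⁆) Z) := by
    intro l hl hlen
    by_contra hcon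
    exact hmin l.length hlen l.get
      ⟨fun i => hl _ (List.get_mem l i), by rwa [List.ofFn_get]⟩
  intro i
  refine ⟨hW.1 i, fun hcon => ?_⟩
  set F := List.ofFn W with hF
  have hFlen : F.length = k := List.length_ofFn
  have hik : (i : ℕ) < F.length := by rw [hFlen]; exact i.isLt
  set l := F.take i with hl
  set m := F.drop (i + 1) with hm
  have hgetF : F[(i : ℕ)] = W i := List.getElem_ofFn hik
  have hsplit : l ++ W i :: m = F := by
    rw [hl, hm, ← hgetF, ← List.drop_eq_getElem_cons hik, List.take_append_drop]
  have hFq : ∀ x ∈ F, x ∈ q := by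
    intro x hx
    obtain ⟨j, rfl⟩ := List.mem_ofFn.1 hx
    exact hW.1 j
  have hlq : ∀ x ∈ l, x ∈ q := fun x hx => hFq x (List.mem_of_mem_take hx)
  have hmq : ∀ x ∈ m, x ∈ q := fun x hx => hFq x (List.mem_of_mem_drop hx)
  have hllen : l.length = (i : ℕ) := by
    rw [hl, List.length_take]; omega
  have hmlen : m.length = k - (i : ℕ) - 1 := by
    rw [hm, List.length_drop, hFlen]; omega
  have hlen : l.length + 1 + m.length = k := by
    rw [hllen, hmlen]; have := i.isLt; omega
  have hmove := msc_move σ q hadd hsmul Z k Hmin m l (W i) hlq hmq (hW.1 i) hlen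
  rw [hsplit] at hmove
  -- the end bracket is in q + σ(q)
  have hlm : (l ++ m).length < k := by simp at hlen ⊢; omega
  obtain ⟨a, ha, b, hb, heq⟩ := Hmin (l ++ m)
    (fun x hx => by rcases List.mem_append.1 hx with h | h; exacts [hlq x h, hmq x h]) hlm
  have hend : memSumConj σ q (((l ++ m) ++ [W i]).foldl (fun a b => ⁅a, b⁆) Z) := by
    refine ⟨⁅a, W i⁆, q.lie_mem ha (hW.1 i), ⁅b, σ (W i)⁆, q.lie_mem hb hcon, ?_⟩
    rw [List.foldl_append, heq]
    simp only [List.foldl_cons, List.foldl_nil]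
    rw [hbr, hinv, add_lie]
  have : memSumConj σ q (F.foldl (fun a b => ⁅a, b⁆) Z) := by
    have := msc_add σ q hadd hmove hend
    simpa using this
  exact hW.2 this
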